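/- Let J ≥ 2 be an integer, γ ∈ (0,1), and q_A, q_B ∈ (0,1) with q_A ≠ q_B. Then the casino's asymptotic profit per coup under the random-mixture strategy, R_C = γ f(q_A) + (1−γ) f(q_B) − f(γ q_A + (1−γ) q_B), is strictly positive. -/

import Mathlib

/-- `f(z) = J(1-z)z^J/(1-z^J)`. -/
noncomputable def futurityF (J : ℕ) (z : ℝ) : ℝ :=
  (J : ℝ) * (1 - z) * z ^ J / (1 - z ^ J)

open Finset Set

namespace FutAux

noncomputable def qs (J : ℕ) (z : ℝ) : ℝ := ∑ k ∈ Finset.range J, z ^ k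
noncomputable def dqs (J : ℕ) (z : ℝ) : ℝ := ∑ k ∈ Finset.range J, (k : ℝ) * z ^ (k - 1)
noncomputable def ddqs (J : ℕ) (z : ℝ) : ℝ :=
  ∑ k ∈ Finset.range J, (k : ℝ) * ((k : ℝ) - 1) * z ^ (k - 2)
noncomputable def ps (J : ℕ) (z : ℝ) : ℝ := ∑ k ∈ Finset.range J, ((J : ℝ) - k) * z ^ k
noncomputable def rs (J : ℕ) (z : ℝ) : ℝ :=
  ∑ k ∈ Finset.range J, ((J : ℝ) - k) * ((J : ℝ) - k + 1) * z ^ k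
noncomputable def vs (J : ℕ) (z : ℝ) : ℝ :=
  ∑ k ∈ Finset.range J, ((J : ℝ) - 1 - k) * ((k : ℝ) + 1) * z ^ k

lemma geom (J : ℕ) (z : ℝ) : (1 - z) * qs J z = 1 - z ^ J := by
  have := geom_sum_mul z J
  unfold qs
  nlinarith [this]

lemma zdqs (J : ℕ) (z : ℝ) : z * dqs J z = ∑ k ∈ Finset.range J, (k : ℝ) * z ^ k := by
  unfold dqs
  rw [Finset.mul_sum]
  refine Finset.sum_congr rfl fun k _ => ?_
  rcases k with _ | n
  · simp
  · simp only [Nat.add_sub_cancel]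
    ring

lemma zzddqs (J : ℕ) (z : ℝ) :
    z ^ 2 * ddqs J z = ∑ k ∈ Finset.range J, (k : ℝ) * ((k : ℝ) - 1) * z ^ k := by
  unfold ddqs
  rw [Finset.mul_sum]
  refine Finset.sum_congr rfl fun k _ => ?_
  rcases k with _ | n
  · simp
  · rcases n with _ | m
    · norm_num
    · have : m + 1 + 1 - 2 = m := rfl
      rw [this]
      push_cast
      ring

lemma ps_eq (J : ℕ) (z : ℝ) : ps J z = (J : ℝ) * qs J z - z * dqs J z := by
  rw [zdqs, ps, qs, Finset.mul_sum, ← Finset.sum_sub_distrib]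
  refine Finset.sum_congr rfl fun k _ => ?_
  ring

lemma rs_eq (J : ℕ) (z : ℝ) :
    rs J z = (J : ℝ) * ((J : ℝ) + 1) * qs J z - 2 * J * (z * dqs J z) + z ^ 2 * ddqs J z := by
  rw [zdqs, zzddqs, rs, qs, Finset.mul_sum, Finset.mul_sum, ← Finset.sum_sub_distrib,
    ← Finset.sum_add_distrib]
  refine Finset.sum_congr rfl fun k _ => ?_
  ring

lemma qs_succ (J : ℕ) (z : ℝ) : qs (J + 1) z = z * qs J z + 1 := by
  unfold qs
  rw [Finset.sum_range_succ', Finset.mul_sum]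
  simp [pow_succ, mul_comm]

lemma ps_succ (J : ℕ) (z : ℝ) : ps (J + 1) z = z * ps J z + ((J : ℝ) + 1) := by
  unfold ps
  rw [Finset.sum_range_succ', Finset.mul_sum]
  congr 1
  · refine Finset.sum_congr rfl fun k _ => ?_
    push_cast
    ring
  · norm_num

lemma rs_succ (J : ℕ) (z : ℝ) :
    rs (J + 1) z = z * rs J z + ((J : ℝ) + 1) * ((J : ℝ) + 2) := by
  unfold rs
  rw [Finset.sum_range_succ', Finset.mul_sum]
  congr 1
  · refine Finset.sum_congr rfl fun k _ => ?_
    push_cast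
    ring
  · push_cast
    ring

lemma vs_succ (J : ℕ) (z : ℝ) :
    vs (J + 1) z = z * (vs J z + ps J z - qs J z) + (J : ℝ) := by
  unfold vs ps qs
  rw [Finset.sum_range_succ', ← Finset.sum_add_distrib, ← Finset.sum_sub_distrib,
    Finset.mul_sum]
  congr 1
  · refine Finset.sum_congr rfl fun k _ => ?_
    push_cast
    ring
  · push_cast
    ring

lemma pA (J : ℕ) (z : ℝ) : (1 - z) * ps J z = (J : ℝ) - z * qs J z := by
  induction J with
  | zero => simp [ps, qs]
  | succ J ih =>
    rw [ps_succ, qs_succ]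
    push_cast
    linear_combination z * ih

lemma pB (J : ℕ) (z : ℝ) : (1 - z) * vs J z = 2 * ps J z - ((J : ℝ) + 1) * qs J z := by
  induction J with
  | zero => simp [vs, ps, qs]
  | succ J ih =>
    rw [vs_succ, ps_succ, qs_succ]
    push_cast
    linear_combination z * ih + z * pA J z

lemma pC (J : ℕ) (z : ℝ) :
    (1 - z) * rs J z =
      (J : ℝ) * ((J : ℝ) + 1) + 2 * J + 2 - 2 * ps J z - 2 * qs J z - 2 * z ^ J := by
  induction J with
  | zero => simp [rs, ps, qs]
  | succ J ih =>
    rw [rs_succ, ps_succ, qs_succ]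
    push_cast
    rw [pow_succ]
    linear_combination z * ih

lemma main_id (J : ℕ) {z : ℝ} (hz : z ≠ 1) :
    2 * (ps J z) ^ 2 = qs J z * rs J z + (J : ℝ) * vs J z := by
  have h1 : (1 : ℝ) - z ≠ 0 := by
    intro h
    apply hz
    linarith [h]
  have ep : ps J z = ((J : ℝ) - z * qs J z) / (1 - z) := by
    rw [eq_div_iff h1]
    linear_combination pA J z
  have ev : vs J z = (2 * ps J z - ((J : ℝ) + 1) * qs J z) / (1 - z) := by
    rw [eq_div_iff h1]
    linear_combination pB J z
  have er : rs J z = ((J : ℝ) * ((J : ℝ) + 1) + 2 * J + 2 - 2 * ps J z - 2 * qs J z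
      - 2 * z ^ J) / (1 - z) := by
    rw [eq_div_iff h1]
    linear_combination pC J z
  have eg : (z : ℝ) ^ J = 1 - (1 - z) * qs J z := by linear_combination geom J z
  rw [ev, er, ep, eg]
  field_simp
  ring

/-- The key positivity identity for the second-derivative numerator. -/
lemma bracket (J : ℕ) {z : ℝ} (hz : z ≠ 1) :
    (J : ℝ) * ((J : ℝ) - 1) * (qs J z) ^ 2 - z ^ 2 * ddqs J z * qs J z
        - 2 * J * (z * dqs J z) * qs J z + 2 * (z * dqs J z) ^ 2
      = (J : ℝ) * vs J z := by
  have h := main_id J hz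
  rw [ps_eq, rs_eq] at h
  linear_combination h

lemma qs_pos {J : ℕ} (hJ : 1 ≤ J) {z : ℝ} (hz : 0 < z) : 0 < qs J z := by
  apply Finset.sum_pos
  · intro k _
    positivity
  · exact Finset.nonempty_range_iff.mpr (by omega)

lemma vs_pos {J : ℕ} (hJ : 2 ≤ J) {z : ℝ} (hz : 0 < z) : 0 < vs J z := by
  apply Finset.sum_pos'
  · intro k hk
    have hk' : (k : ℝ) + 1 ≤ (J : ℝ) := by exact_mod_cast Finset.mem_range.mp hk
    have h1 : (0:ℝ) ≤ (J : ℝ) - 1 - k := by linarith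
    positivity
  · refine ⟨0, Finset.mem_range.mpr (by omega), ?_⟩
    have h2 : (2:ℝ) ≤ (J:ℝ) := by exact_mod_cast hJ
    simp only [Nat.cast_zero, pow_zero]
    nlinarith

lemma qs_continuous (J : ℕ) : Continuous fun z : ℝ => qs J z := by
  unfold qs
  exact continuous_finset_sum _ fun k _ => continuous_pow k

lemma hasDerivAt_qs (J : ℕ) (x : ℝ) : HasDerivAt (fun z => qs J z) (dqs J x) x := by
  unfold qs dqs
  exact HasDerivAt.fun_sum fun k _ => hasDerivAt_pow k x

lemma hasDerivAt_dqs (J : ℕ) (x : ℝ) : HasDerivAt (fun z => dqs J z) (ddqs J x) x := by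
  unfold dqs ddqs
  refine HasDerivAt.fun_sum fun k _ => ?_
  rcases k with _ | n
  · simpa using hasDerivAt_const x (0:ℝ)
  · have h := (hasDerivAt_pow n x).const_mul ((n+1 : ℕ) : ℝ)
    have hfun : (fun z : ℝ => ((n+1 : ℕ) : ℝ) * z ^ (n + 1 - 1)) =
        fun z : ℝ => ((n+1 : ℕ) : ℝ) * z ^ n := by norm_num
    rw [hfun]
    convert h using 1
    · rfl
    rcases n with _ | m
    · norm_num
    · have : (m + 1 + 1 : ℕ) - 2 = m + 1 - 1 := rfl
      rw [this]
      push_cast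
      ring

/-- On `(0,1)` the function `z ↦ J z^J / q(z)` is strictly convex. -/
lemma fut_convex {J : ℕ} (hJ : 2 ≤ J) :
    StrictConvexOn ℝ (Set.Ioo (0:ℝ) 1) (fun z => (J : ℝ) * z ^ J / qs J z) := by
  have hJ1 : 1 ≤ J := by omega
  -- first derivative formula
  set g1 : ℝ → ℝ := fun x =>
    ((J:ℝ) * ((J:ℝ) * x ^ (J-1)) * qs J x - (J:ℝ) * x ^ J * dqs J x) / (qs J x) ^ 2 with hg1def
  have hnum : ∀ x : ℝ, HasDerivAt (fun z : ℝ => (J:ℝ) * z ^ J) ((J:ℝ) * ((J:ℝ) * x ^ (J-1))) x := by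
    intro x
    exact (hasDerivAt_pow J x).const_mul ((J:ℝ))
  have hg' : ∀ x ∈ Set.Ioi (0:ℝ), HasDerivAt (fun z => (J : ℝ) * z ^ J / qs J z) (g1 x) x := by
    intro x hx
    exact (hnum x).div (hasDerivAt_qs J x) (ne_of_gt (qs_pos hJ1 hx))
  -- second derivative formula
  set g2 : ℝ → ℝ := fun x =>
    (((J:ℝ) * ((J:ℝ) * (((J-1 : ℕ):ℝ) * x ^ (J-1-1))) * qs J x
        + (J:ℝ) * ((J:ℝ) * x ^ (J-1)) * dqs J x
      - ((J:ℝ) * ((J:ℝ) * x ^ (J-1)) * dqs J x + (J:ℝ) * x ^ J * ddqs J x))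
        * (qs J x) ^ 2
      - ((J:ℝ) * ((J:ℝ) * x ^ (J-1)) * qs J x - (J:ℝ) * x ^ J * dqs J x)
        * ((2:ℕ) * qs J x ^ 1 * dqs J x)) / ((qs J x) ^ 2) ^ 2 with hg2def
  have hg1' : ∀ x ∈ Set.Ioi (0:ℝ), HasDerivAt g1 (g2 x) x := by
    intro x hx
    have h1 : HasDerivAt (fun z : ℝ => (J:ℝ) * ((J:ℝ) * z ^ (J-1)))
        ((J:ℝ) * ((J:ℝ) * (((J-1 : ℕ):ℝ) * x ^ (J-1-1)))) x :=
      ((hasDerivAt_pow (J-1) x).const_mul ((J:ℝ))).const_mul ((J:ℝ))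
    have hN : HasDerivAt (fun z : ℝ => (J:ℝ) * ((J:ℝ) * z ^ (J-1)) * qs J z
        - (J:ℝ) * z ^ J * dqs J z)
        ((J:ℝ) * ((J:ℝ) * (((J-1 : ℕ):ℝ) * x ^ (J-1-1))) * qs J x
          + (J:ℝ) * ((J:ℝ) * x ^ (J-1)) * dqs J x
          - ((J:ℝ) * ((J:ℝ) * x ^ (J-1)) * dqs J x + (J:ℝ) * x ^ J * ddqs J x)) x :=
      (h1.mul (hasDerivAt_qs J x)).sub ((hnum x).mul (hasDerivAt_dqs J x))
    have hD : HasDerivAt (fun z : ℝ => (qs J z) ^ 2)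
        ((2:ℕ) * qs J x ^ 1 * dqs J x) x := (hasDerivAt_qs J x).pow 2
    have := hN.div hD (by
      have := qs_pos hJ1 hx
      positivity)
    exact this
  -- identify the second derivative
  have hd2 : ∀ x ∈ Set.Ioo (0:ℝ) 1, deriv^[2] (fun z => (J : ℝ) * z ^ J / qs J z) x = g2 x := by
    intro x hx
    have hx0 : x ∈ Set.Ioi (0:ℝ) := hx.1
    have heq : deriv (fun z => (J : ℝ) * z ^ J / qs J z) =ᶠ[nhds x] g1 := by
      filter_upwards [isOpen_Ioi.mem_nhds hx0] with y hy using (hg' y hy).deriv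
    show deriv (deriv (fun z => (J : ℝ) * z ^ J / qs J z)) x = g2 x
    rw [heq.deriv_eq]
    exact (hg1' x hx0).deriv
  -- positivity of the second derivative
  have hpos : ∀ x ∈ Set.Ioo (0:ℝ) 1, 0 < g2 x := by
    intro x hx
    have hq := qs_pos hJ1 hx.1
    have hv := vs_pos hJ hx.1
    have hxne : x ≠ 1 := ne_of_lt hx.2
    have hb := bracket J hxne
    have hkey : g2 x = ((J:ℝ) * x ^ (J-2) * qs J x) * ((J:ℝ) * vs J x) / ((qs J x) ^ 2) ^ 2 := by
      rw [hg2def]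
      obtain ⟨m, rfl⟩ : ∃ m, J = m + 2 := ⟨J - 2, by omega⟩
      rw [← hb]
      simp only [show m + 2 - 1 = m + 1 from rfl, show m + 2 - 2 = m from rfl,
        show m + 1 - 1 = m from rfl]
      push_cast
      ring_nf
    rw [hkey]
    have hx2 : (0:ℝ) < x ^ (J-2) := pow_pos hx.1 _
    have hJ0 : (0:ℝ) < (J:ℝ) := Nat.cast_pos.mpr (by omega)
    positivity
  refine strictConvexOn_of_deriv2_pos (convex_Ioo 0 1) ?_ ?_
  · exact ContinuousOn.div (by fun_prop) (qs_continuous J).continuousOn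
      (fun x hx => ne_of_gt (qs_pos hJ1 hx.1))
  · intro x hx
    rw [interior_Ioo] at hx
    rw [hd2 x hx]
    exact hpos x hx

lemma futurityF_eq {J : ℕ} (hJ : 1 ≤ J) {z : ℝ} (hz : z ∈ Set.Ioo (0:ℝ) 1) :
    futurityF J z = (J : ℝ) * z ^ J / qs J z := by
  have h1z : (1:ℝ) - z ≠ 0 := by
    have := hz.2
    intro h
    linarith
  have hq : qs J z ≠ 0 := ne_of_gt (qs_pos hJ hz.1)
  unfold futurityF
  rw [← geom]
  rw [show (J : ℝ) * (1 - z) * z ^ J = (1 - z) * ((J:ℝ) * z ^ J) by ring]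
  exact mul_div_mul_left _ _ h1z

end FutAux

/-- For `J ≥ 2`, `γ ∈ (0,1)` and `q_A ≠ q_B` in `(0,1)`, the casino's asymptotic profit
per coup under the random-mixture strategy,
`R_C = γ f(q_A) + (1-γ) f(q_B) - f(γ q_A + (1-γ) q_B)`, is strictly positive. -/
theorem random_mixture_profit_pos (J : ℕ) (hJ : 2 ≤ J) (γ qA qB : ℝ)
    (hγ : γ ∈ Set.Ioo (0 : ℝ) 1) (hqA : qA ∈ Set.Ioo (0 : ℝ) 1)
    (hqB : qB ∈ Set.Ioo (0 : ℝ) 1) (hne : qA ≠ qB) :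
    0 < γ * futurityF J qA + (1 - γ) * futurityF J qB
        - futurityF J (γ * qA + (1 - γ) * qB) := by
  have hJ1 : 1 ≤ J := by omega
  have hconv := FutAux.fut_convex hJ
  obtain ⟨hγ0, hγ1⟩ := hγ
  have hmem : γ * qA + (1 - γ) * qB ∈ Set.Ioo (0:ℝ) 1 := by
    constructor
    · nlinarith [hqA.1, hqB.1]
    · nlinarith [hqA.2, hqB.2]
  have h := hconv.2 hqA hqB hne hγ0 (show (0:ℝ) < 1 - γ by linarith) (by ring)
  simp only [smul_eq_mul] at h
  rw [FutAux.futurityF_eq hJ1 hqA, FutAux.futurityF_eq hJ1 hqB,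
    FutAux.futurityF_eq hJ1 hmem]
  linarith
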